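/- Let $k \geq 1$ and $i_j \geq 1$. Define $P_{i_j}(\lambda) = \frac{1}{i_j!} \prod_{c=0}^{i_j-1}(k\lambda - c)$. Then for all $\lambda$ with $k\lambda \in [0, i_j]$ and $i_j \leq k$, the derivative satisfies $|P_{i_j}'(\lambda)| \leq k^2$. -/

import Mathlib

open Finset

lemma fac_mul_fac_le (a b : ℕ) : (a + 1).factorial * (b + 1).factorial ≤ (a + b + 1).factorial := by
  induction b with
  | zero => simp
  | succ b ih =>
    have : (a + 1).factorial * (b + 1 + 1).factorial
        = (a + 1).factorial * (b + 1).factorial * (b + 2) := by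
      rw [Nat.factorial_succ (b + 1)]; ring
    rw [this]
    calc (a + 1).factorial * (b + 1).factorial * (b + 2)
        ≤ (a + b + 1).factorial * (b + 2) := Nat.mul_le_mul_right _ ih
      _ ≤ (a + b + 1).factorial * (a + b + 2) := by
          exact Nat.mul_le_mul_left _ (by omega)
      _ = (a + (b + 1) + 1).factorial := by
          rw [show a + (b+1) + 1 = (a + b + 1) + 1 by ring, Nat.factorial_succ (a + b + 1)]; ring

lemma prod_range_add_two (t : ℕ) : ∏ j ∈ Finset.range t, (j + 2) = (t + 1).factorial := by
  induction t with
  | zero => simp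
  | succ t ih => rw [Finset.prod_range_succ, ih, Nat.factorial_succ (t + 1)]; ring

lemma prod_dist_le (m n0 : ℕ) (h : n0 < m) :
    ∏ c ∈ Finset.range m, (1 + (max n0 c - min n0 c)) ≤ m.factorial := by
  have hsplit := Finset.prod_range_mul_prod_Ico
    (fun c => 1 + (max n0 c - min n0 c)) (Nat.succ_le_of_lt h)
  have h1 : ∏ c ∈ Finset.range (n0 + 1), (1 + (max n0 c - min n0 c))
      = (n0 + 1).factorial := by
    rw [← Finset.prod_range_reflect]
    have : ∀ j ∈ Finset.range (n0 + 1),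
        1 + (max n0 (n0 + 1 - 1 - j) - min n0 (n0 + 1 - 1 - j)) = j + 1 := by
      intro j hj
      simp only [Finset.mem_range] at hj
      omega
    rw [Finset.prod_congr rfl this, Finset.prod_range_add_one_eq_factorial]
  have h2 : ∏ c ∈ Finset.Ico (n0 + 1) m, (1 + (max n0 c - min n0 c))
      = (m - n0).factorial := by
    rw [Finset.prod_Ico_eq_prod_range]
    have : ∀ j ∈ Finset.range (m - (n0 + 1)),
        1 + (max n0 (n0 + 1 + j) - min n0 (n0 + 1 + j)) = j + 2 := by
      intro j _; omega
    rw [Finset.prod_congr rfl this, prod_range_add_two]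
    congr 1; omega
  rw [← hsplit, h1, h2]
  have := fac_mul_fac_le n0 (m - n0 - 1)
  have e1 : m - n0 - 1 + 1 = m - n0 := by omega
  have e2 : n0 + (m - n0 - 1) + 1 = m := by omega
  rw [e1, e2] at this
  exact this

lemma erase_prod_abs_le (m : ℕ) (hm : 1 ≤ m) (x : ℝ) (hx0 : 0 ≤ x) (hxm : x ≤ m) (r : ℕ) :
    ∏ c ∈ (Finset.range m).erase r, |x - c| ≤ (m.factorial : ℝ) := by
  set n0 : ℕ := min ⌊x⌋₊ (m - 1) with hn0def
  have hn0 : n0 < m := by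
    have : m - 1 < m := by omega
    exact lt_of_le_of_lt (min_le_right _ _) this
  have habs : |x - n0| ≤ 1 := by
    rcases le_or_gt (⌊x⌋₊) (m - 1) with h | h
    · have : n0 = ⌊x⌋₊ := min_eq_left h
      rw [this, abs_le]
      constructor
      · have := Nat.floor_le hx0
        linarith
      · have := Nat.lt_floor_add_one x
        linarith
    · have hfl : ⌊x⌋₊ ≤ m := Nat.floor_le_of_le hxm
      have : n0 = m - 1 := min_eq_right (by omega)
      rw [this, abs_le]
      have hge : (⌊x⌋₊ : ℝ) ≤ x := Nat.floor_le hx0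
      have hc : ((m : ℝ)) - 1 = ((m - 1 : ℕ) : ℝ) := by
        push_cast [Nat.cast_sub hm]; ring
      constructor
      · have : (m : ℝ) - 1 ≤ x := by
          have : ((m - 1 : ℕ) : ℝ) < (⌊x⌋₊ : ℝ) := by exact_mod_cast h
          nlinarith [hge, this, hc]
        linarith [hc ▸ this]
      · rw [← hc]; linarith
  have hfac : ∀ c : ℕ, |x - c| ≤ ((1 + (max n0 c - min n0 c) : ℕ) : ℝ) := by
    intro c
    have h1 : |x - c| ≤ |x - n0| + |(n0 : ℝ) - c| := by
      have := abs_sub_abs_le_abs_sub (x - (c:ℝ)) (x - n0)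
      calc |x - c| = |(x - n0) + ((n0:ℝ) - c)| := by ring_nf
        _ ≤ |x - n0| + |(n0:ℝ) - c| := abs_add_le _ _
    have h2 : |(n0 : ℝ) - c| = ((max n0 c - min n0 c : ℕ) : ℝ) := by
      rcases le_total n0 c with h | h
      · rw [max_eq_right h, min_eq_left h, Nat.cast_sub h, abs_sub_comm,
          abs_of_nonneg (by exact sub_nonneg.mpr (Nat.cast_le.mpr h))]
      · rw [max_eq_left h, min_eq_right h, Nat.cast_sub h,
          abs_of_nonneg (by exact sub_nonneg.mpr (Nat.cast_le.mpr h))]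
    push_cast
    push_cast at h2
    rw [h2] at h1
    linarith
  calc ∏ c ∈ (Finset.range m).erase r, |x - c|
      ≤ ∏ c ∈ (Finset.range m).erase r, ((1 + (max n0 c - min n0 c) : ℕ) : ℝ) := by
        apply Finset.prod_le_prod
        · intro c _; exact abs_nonneg _
        · intro c _; exact hfac c
    _ = ((∏ c ∈ (Finset.range m).erase r, (1 + (max n0 c - min n0 c)) : ℕ) : ℝ) := by
        push_cast; rfl
    _ ≤ ((∏ c ∈ Finset.range m, (1 + (max n0 c - min n0 c)) : ℕ) : ℝ) := by
        have : (∏ c ∈ (Finset.range m).erase r, (1 + (max n0 c - min n0 c)))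
            ≤ ∏ c ∈ Finset.range m, (1 + (max n0 c - min n0 c)) :=
          Finset.prod_le_prod_of_subset_of_one_le' (Finset.erase_subset _ _)
            (fun i _ _ => by omega)
        exact_mod_cast this
    _ ≤ ((m.factorial : ℕ) : ℝ) := by exact_mod_cast prod_dist_le m n0 hn0

theorem aux_polynomial_deriv_bound (k ij : ℕ) (hk : 1 ≤ k) (hij1 : 1 ≤ ij) (hijk : ij ≤ k)
    (P : ℝ → ℝ)
    (hP : ∀ lam, P lam = (1 / (Nat.factorial ij : ℝ)) * ∏ c ∈ Finset.range ij, ((k : ℝ) * lam - c)) :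
    ∀ lam : ℝ, (k : ℝ) * lam ∈ Set.Icc (0 : ℝ) (ij : ℝ) → |deriv P lam| ≤ (k : ℝ) ^ 2 := by
  intro lam hmem
  obtain ⟨hx0, hxm⟩ := hmem
  have hPeq : P = fun l => (1 / (Nat.factorial ij : ℝ)) *
      ∏ c ∈ Finset.range ij, ((k : ℝ) * l - (c : ℝ)) := funext hP
  -- derivative of the product
  have hprod : HasDerivAt (fun l => ∏ c ∈ Finset.range ij, ((k : ℝ) * l - (c : ℝ)))
      (∑ r ∈ Finset.range ij,
        (∏ c ∈ (Finset.range ij).erase r, ((k : ℝ) * lam - (c : ℝ))) • (k : ℝ)) lam := by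
    have := HasDerivAt.fun_finsetProd (u := Finset.range ij)
      (f := fun c l => (k : ℝ) * l - (c : ℝ)) (f' := fun _ => (k : ℝ)) (x := lam)
      (fun c _ => by
        simpa using ((hasDerivAt_id lam).const_mul (k : ℝ)).sub_const (c : ℝ))
    exact this
  have hderiv : HasDerivAt P
      ((1 / (Nat.factorial ij : ℝ)) * ∑ r ∈ Finset.range ij,
        (∏ c ∈ (Finset.range ij).erase r, ((k : ℝ) * lam - (c : ℝ))) • (k : ℝ)) lam := by
    rw [hPeq]
    exact hprod.const_mul _
  rw [hderiv.deriv]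
  have hfacpos : (0 : ℝ) < (Nat.factorial ij : ℝ) := by
    exact_mod_cast Nat.factorial_pos ij
  have hterm : ∀ r ∈ Finset.range ij,
      |(∏ c ∈ (Finset.range ij).erase r, ((k : ℝ) * lam - (c : ℝ))) • (k : ℝ)|
        ≤ (Nat.factorial ij : ℝ) * k := by
    intro r _
    rw [smul_eq_mul, abs_mul, abs_of_nonneg (by positivity : (0:ℝ) ≤ (k:ℝ))]
    apply mul_le_mul_of_nonneg_right _ (by positivity)
    rw [Finset.abs_prod]
    exact erase_prod_abs_le ij hij1 ((k : ℝ) * lam) hx0 hxm r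
  have hsum : |∑ r ∈ Finset.range ij,
      (∏ c ∈ (Finset.range ij).erase r, ((k : ℝ) * lam - (c : ℝ))) • (k : ℝ)|
        ≤ (ij : ℝ) * ((Nat.factorial ij : ℝ) * k) := by
    calc |∑ r ∈ Finset.range ij, _| ≤ ∑ r ∈ Finset.range ij,
          |(∏ c ∈ (Finset.range ij).erase r, ((k : ℝ) * lam - (c : ℝ))) • (k : ℝ)| :=
        Finset.abs_sum_le_sum_abs _ _
      _ ≤ ∑ _r ∈ Finset.range ij, (Nat.factorial ij : ℝ) * k :=
        Finset.sum_le_sum hterm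
      _ = (ij : ℝ) * ((Nat.factorial ij : ℝ) * k) := by
        rw [Finset.sum_const, Finset.card_range]; ring
  rw [abs_mul, abs_of_nonneg (by positivity : (0:ℝ) ≤ 1 / (Nat.factorial ij : ℝ))]
  calc 1 / (Nat.factorial ij : ℝ) * |∑ r ∈ Finset.range ij,
        (∏ c ∈ (Finset.range ij).erase r, ((k : ℝ) * lam - (c : ℝ))) • (k : ℝ)|
      ≤ 1 / (Nat.factorial ij : ℝ) * ((ij : ℝ) * ((Nat.factorial ij : ℝ) * k)) := by
        apply mul_le_mul_of_nonneg_left hsum (by positivity)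
    _ = (ij : ℝ) * k := by field_simp
    _ ≤ (k : ℝ) * k := by
        apply mul_le_mul_of_nonneg_right _ (by positivity)
        exact_mod_cast hijk
    _ = (k : ℝ) ^ 2 := by ring
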